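/- arXiv:1706.06006 — 4 statements merged into one kernel-verified Lean document; each statement's English description precedes it below -/
import Mathlib

section
/- If an aggregator X is σ(X₁,...,X_N)-measurable, calibrated (E[Y|X] = X a.s.), and extremizing (Var(E[Y | X_j, j ∈ v]) ≤ Var(X) for all subsets v, in particular for v = {1,...,N}), then X = E[Y | X₁, ..., X_N] almost surely. -/
open MeasureTheory ProbabilityTheory

lemma memℒp_two_condexp_aux {α : Type*} {m m0 : MeasurableSpace α} {μ : Measure α}
    [IsFiniteMeasure μ] (hm : m ≤ m0) {f : α → ℝ} (hf : MemLp f 2 μ) :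
    MemLp (μ[f|m]) 2 μ := by
  have h : (condExpL2 ℝ ℝ hm (hf.toLp f) : α → ℝ) =ᵐ[μ] μ[f|m] :=
    ae_eq_condExp_of_forall_setIntegral_eq hm (hf.integrable one_le_two)
      (fun s _ _ => (integrable_condExpL2_of_isFiniteMeasure hm).integrableOn)
      (fun s hs hμs => by
        rw [integral_condExpL2_eq hm (hf.toLp f) hs hμs.ne]
        exact setIntegral_congr_ae (hm s hs) (hf.coeFn_toLp.mono fun x hx _ => hx))
      (aestronglyMeasurable_condExpL2 hm _)
  exact (Lp.memLp _).ae_eq h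

lemma integrable_mul_of_memℒp_two {α : Type*} {m0 : MeasurableSpace α} {μ : Measure α}
    {f g : α → ℝ} (hf : MemLp f 2 μ) (hg : MemLp g 2 μ) :
    Integrable (f * g) μ := by
  have : MemLp (f • g) 1 μ := hg.smul hf (hpqr := ⟨by norm_num [ENNReal.inv_two_add_inv_two]⟩)
  simpa [smul_eq_mul] using memLp_one_iff_integrable.mp this

/-- If an aggregator `X` is `σ(X₁,...,X_N)`-measurable, calibrated, and extremizing,
then `X = E[Y | X₁, ..., X_N]` almost surely. -/
theorem calibrated_extremizing_eq_efficient
    {Ω : Type*} [m : MeasurableSpace Ω] (μ : Measure Ω) [IsProbabilityMeasure μ]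
    {N : ℕ} (Y : Ω → ℝ) (X : Fin N → Ω → ℝ) (𝒳 : Ω → ℝ)
    (hY : MemLp Y 2 μ) (h𝒳 : MemLp 𝒳 2 μ)
    (hGm : (⨆ j, MeasurableSpace.comap (X j) Real.measurableSpace) ≤ m)
    (hmeas : Measurable[⨆ j, MeasurableSpace.comap (X j) Real.measurableSpace] 𝒳)
    (hcal : μ[Y | MeasurableSpace.comap 𝒳 Real.measurableSpace] =ᵐ[μ] 𝒳)
    (hext : ∀ v : Finset (Fin N),
      variance (μ[Y | ⨆ j ∈ v, MeasurableSpace.comap (X j) Real.measurableSpace]) μ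
        ≤ variance 𝒳 μ) :
    𝒳 =ᵐ[μ] μ[Y | ⨆ j, MeasurableSpace.comap (X j) Real.measurableSpace] := by
  set G := ⨆ j, MeasurableSpace.comap (X j) Real.measurableSpace with hGdef
  set σ𝒳 := MeasurableSpace.comap 𝒳 Real.measurableSpace with hσdef
  have hσG : σ𝒳 ≤ G := hmeas.comap_le
  have hσm : σ𝒳 ≤ m := hσG.trans hGm
  set Z := μ[Y | G] with hZdef
  have hZ2 : MemLp Z 2 μ := memℒp_two_condexp_aux hGm hY
  have hYint : Integrable Y μ := hY.integrable one_le_two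
  have hZint : Integrable Z μ := integrable_condExp
  have h𝒳int : Integrable 𝒳 μ := h𝒳.integrable one_le_two
  -- tower property
  have htower : μ[Z | σ𝒳] =ᵐ[μ] 𝒳 := (condExp_condExp_of_le hσG hGm).trans hcal
  -- 𝒳 is σ𝒳-strongly measurable
  have h𝒳meas : StronglyMeasurable[σ𝒳] 𝒳 :=
    (Measurable.of_comap_le le_rfl).stronglyMeasurable
  have hmulint : Integrable (𝒳 * Z) μ := integrable_mul_of_memℒp_two h𝒳 hZ2
  have hce : μ[𝒳 * Z | σ𝒳] =ᵐ[μ] 𝒳 * μ[Z | σ𝒳] :=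
    condExp_mul_of_stronglyMeasurable_left h𝒳meas hmulint hZint
  -- key: E[𝒳 Z] = E[𝒳²]
  have hkey : ∫ ω, 𝒳 ω * Z ω ∂μ = ∫ ω, 𝒳 ω * 𝒳 ω ∂μ := by
    have h1 : ∫ ω, (𝒳 * Z) ω ∂μ = ∫ ω, (μ[𝒳 * Z | σ𝒳]) ω ∂μ :=
      (integral_condExp hσm).symm
    have h2 : μ[𝒳 * Z | σ𝒳] =ᵐ[μ] fun ω => 𝒳 ω * 𝒳 ω := by
      refine hce.trans ?_
      filter_upwards [htower] with ω hω
      simp [hω]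
    calc ∫ ω, 𝒳 ω * Z ω ∂μ = ∫ ω, (μ[𝒳 * Z | σ𝒳]) ω ∂μ := h1
      _ = ∫ ω, 𝒳 ω * 𝒳 ω ∂μ := integral_congr_ae h2
  -- means are equal
  have hEZ : ∫ ω, Z ω ∂μ = ∫ ω, 𝒳 ω ∂μ := by
    calc ∫ ω, Z ω ∂μ = ∫ ω, Y ω ∂μ := integral_condExp hGm
      _ = ∫ ω, (μ[Y | σ𝒳]) ω ∂μ := (integral_condExp hσm).symm
      _ = ∫ ω, 𝒳 ω ∂μ := integral_congr_ae hcal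
  -- variance inequality at v = univ
  have huniv : (⨆ j ∈ (Finset.univ : Finset (Fin N)),
      MeasurableSpace.comap (X j) Real.measurableSpace) = G := by
    rw [hGdef]; simp
  have hvar : variance Z μ ≤ variance 𝒳 μ := by
    have := hext Finset.univ
    rwa [huniv] at this
  -- integral of the squared difference
  have hD2 : MemLp (Z - 𝒳) 2 μ := hZ2.sub h𝒳
  have hintD2 : Integrable (fun ω => (Z ω - 𝒳 ω) ^ 2) μ := by
    simpa using hD2.integrable_sq
  have hintZ2 : Integrable (fun ω => Z ω ^ 2) μ := hZ2.integrable_sq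
  have hint𝒳2 : Integrable (fun ω => 𝒳 ω ^ 2) μ := h𝒳.integrable_sq
  have hcalc : ∫ ω, (Z ω - 𝒳 ω) ^ 2 ∂μ
      = (∫ ω, Z ω ^ 2 ∂μ) - ∫ ω, 𝒳 ω ^ 2 ∂μ := by
    have hmulint' : Integrable (fun ω => 2 * (𝒳 ω * Z ω)) μ := by
      simpa [Pi.mul_apply] using hmulint.const_mul 2
    have hexp : ∫ ω, (Z ω - 𝒳 ω) ^ 2 ∂μ
        = ∫ ω, (Z ω ^ 2 - 2 * (𝒳 ω * Z ω) + 𝒳 ω ^ 2) ∂μ := by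
      refine integral_congr_ae (Filter.Eventually.of_forall fun ω => ?_)
      ring
    have step1 : ∫ ω, (Z ω ^ 2 - 2 * (𝒳 ω * Z ω) + 𝒳 ω ^ 2) ∂μ
        = (∫ ω, (Z ω ^ 2 - 2 * (𝒳 ω * Z ω)) ∂μ) + ∫ ω, 𝒳 ω ^ 2 ∂μ := by
      exact integral_add (hintZ2.sub hmulint') hint𝒳2
    have step2 : ∫ ω, (Z ω ^ 2 - 2 * (𝒳 ω * Z ω)) ∂μ
        = (∫ ω, Z ω ^ 2 ∂μ) - ∫ ω, 2 * (𝒳 ω * Z ω) ∂μ := by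
      exact integral_sub hintZ2 hmulint'
    rw [hexp, step1, step2, integral_const_mul]
    have h𝒳sq : ∫ ω, 𝒳 ω * 𝒳 ω ∂μ = ∫ ω, 𝒳 ω ^ 2 ∂μ := by
      congr 1; funext ω; ring
    rw [show ∫ ω, 𝒳 ω * Z ω ∂μ = ∫ ω, 𝒳 ω ^ 2 ∂μ from hkey.trans h𝒳sq]
    ring
  have hvZ := variance_eq_sub hZ2
  have hv𝒳 := variance_eq_sub h𝒳
  have hfinal : ∫ ω, (Z ω - 𝒳 ω) ^ 2 ∂μ ≤ 0 := by
    rw [hcalc]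
    have e1 : μ[Z ^ 2] = ∫ ω, Z ω ^ 2 ∂μ := by rfl
    have e2 : μ[𝒳 ^ 2] = ∫ ω, 𝒳 ω ^ 2 ∂μ := by rfl
    rw [e1] at hvZ; rw [e2] at hv𝒳
    have hEZ' : μ[Z] = μ[𝒳] := hEZ
    have hsq : (∫ x, Z x ∂μ) ^ 2 = (∫ x, 𝒳 x ∂μ) ^ 2 := by rw [hEZ']
    linarith [hvar, hvZ, hv𝒳, hsq]
  have hzero : (fun ω => (Z ω - 𝒳 ω) ^ 2) =ᵐ[μ] 0 := by
    have hnn : 0 ≤ᵐ[μ] fun ω => (Z ω - 𝒳 ω) ^ 2 :=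
      Filter.Eventually.of_forall fun ω => sq_nonneg _
    have : ∫ ω, (Z ω - 𝒳 ω) ^ 2 ∂μ = 0 :=
      le_antisymm hfinal (integral_nonneg fun ω => sq_nonneg _)
    exact (integral_eq_zero_iff_of_nonneg (fun ω => sq_nonneg _) hintD2).mp this
  filter_upwards [hzero] with ω hω
  have h0 : (Z ω - 𝒳 ω) ^ 2 = 0 := by simpa using hω
  have h1 : Z ω - 𝒳 ω = 0 := by
    have := sq_eq_zero_iff.mp h0
    simpa using this
  linarith
end

section
/- Let X₁, ..., X_N be calibrated predictions of Y and X_w = Σ w_j X_j with fixed nonnegative weights summing to 1. Then E[(Y − X_w)²] = (E[Y²] − E[X_w²]) − Σᵢ Σⱼ wᵢ wⱼ E[(Xᵢ − Xⱼ)²]. -/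
open MeasureTheory ProbabilityTheory

private lemma integrable_mul_of_memL2 {Ω : Type*} [MeasurableSpace Ω] {μ : Measure Ω}
    {f g : Ω → ℝ} (hf : MemLp f 2 μ) (hg : MemLp g 2 μ) :
    Integrable (fun ω => f ω * g ω) μ := by
  have h : MemLp (f • g) 1 μ := hg.smul hf
  exact memLp_one_iff_integrable.mp h

/-- For calibrated predictions `X₁,...,X_N` of `Y` and a weighted arithmetic mean
`X_w = Σ wⱼ Xⱼ` with fixed nonnegative weights summing to one,
`E[(Y − X_w)²] = (E[Y²] − E[X_w²]) − Σᵢ Σⱼ wᵢ wⱼ E[(Xᵢ − Xⱼ)²]`. -/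
theorem squared_error_weighted_mean
    {Ω : Type*} [m : MeasurableSpace Ω] (μ : Measure Ω) [IsProbabilityMeasure μ]
    {N : ℕ} (Y : Ω → ℝ) (X : Fin N → Ω → ℝ) (w : Fin N → ℝ)
    (hY : MemLp Y 2 μ) (hX : ∀ j, MemLp (X j) 2 μ)
    (hw : ∀ j, 0 ≤ w j) (hw1 : ∑ j, w j = 1)
    (hle : ∀ j, MeasurableSpace.comap (X j) Real.measurableSpace ≤ m)
    (hcal : ∀ j, X j =ᵐ[μ] μ[Y | MeasurableSpace.comap (X j) Real.measurableSpace]) :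
    ∫ ω, (Y ω - ∑ j, w j * X j ω) ^ 2 ∂μ
      = (∫ ω, Y ω ^ 2 ∂μ - ∫ ω, (∑ j, w j * X j ω) ^ 2 ∂μ)
        - ∑ i, ∑ j, w i * w j * ∫ ω, (X i ω - X j ω) ^ 2 ∂μ := by
  -- notation
  set A : ℝ := ∫ ω, Y ω ^ 2 ∂μ with hA
  set S : Fin N → ℝ := fun j => ∫ ω, X j ω ^ 2 ∂μ with hS
  set T : Fin N → Fin N → ℝ := fun i j => ∫ ω, X i ω * X j ω ∂μ with hT
  -- integrability facts
  have hIXX : ∀ i j, Integrable (fun ω => X i ω * X j ω) μ :=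
    fun i j => integrable_mul_of_memL2 (hX i) (hX j)
  have hIYX : ∀ j, Integrable (fun ω => Y ω * X j ω) μ :=
    fun j => integrable_mul_of_memL2 hY (hX j)
  have hW : MemLp (fun ω => ∑ j, w j * X j ω) 2 μ := by
    have h : MemLp (∑ j, fun ω => w j * X j ω) 2 μ :=
      memLp_finset_sum' _ (fun j _ => ((hX j).const_mul (w j)))
    convert h using 1
    ext ω
    simp
  have hIYW : Integrable (fun ω => Y ω * ∑ j, w j * X j ω) μ :=
    integrable_mul_of_memL2 hY hW
  have hIWW : Integrable (fun ω => (∑ j, w j * X j ω) ^ 2) μ := hW.integrable_sq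
  have hIYY : Integrable (fun ω => Y ω ^ 2) μ := hY.integrable_sq
  -- calibration: ∫ Y * X j = ∫ X j ^ 2
  have hkey : ∀ j, ∫ ω, Y ω * X j ω ∂μ = S j := by
    intro j
    set mj := MeasurableSpace.comap (X j) Real.measurableSpace with hmj
    have hm : mj ≤ m := hle j
    haveI : SigmaFinite (μ.trim hm) := by infer_instance
    have hmeas : StronglyMeasurable[mj] (X j) :=
      (Measurable.of_comap_le le_rfl).stronglyMeasurable
    have hfg : Integrable (X j * Y) μ := by
      exact (hIYX j).congr (Filter.Eventually.of_forall fun ω => mul_comm _ _)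
    have h1 : μ[X j * Y | mj] =ᵐ[μ] X j * μ[Y | mj] :=
      condExp_mul_of_stronglyMeasurable_left hmeas hfg (hY.integrable one_le_two)
    have h2 : ∫ ω, (X j * Y) ω ∂μ = ∫ ω, (X j * μ[Y|mj]) ω ∂μ := by
      rw [← integral_condExp hm (f := X j * Y)]
      exact integral_congr_ae h1
    have h3 : ∫ ω, (X j * μ[Y|mj]) ω ∂μ = ∫ ω, X j ω ^ 2 ∂μ := by
      refine integral_congr_ae ?_
      filter_upwards [hcal j] with ω hω
      simp [Pi.mul_apply, hmj, ← hω, sq]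
    calc ∫ ω, Y ω * X j ω ∂μ = ∫ ω, (X j * Y) ω ∂μ := by
          simp [Pi.mul_apply, mul_comm]
      _ = S j := by rw [h2, h3]
  -- ∫ Y * W = Σ w j * S j
  have hYW : ∫ ω, Y ω * ∑ j, w j * X j ω ∂μ = ∑ j, w j * S j := by
    have : ∀ ω, Y ω * ∑ j, w j * X j ω = ∑ j, w j * (Y ω * X j ω) := by
      intro ω; rw [Finset.mul_sum]; exact Finset.sum_congr rfl fun j _ => by ring
    rw [integral_congr_ae (Filter.Eventually.of_forall this),
      integral_finset_sum _ (fun j _ => (hIYX j).const_mul (w j))]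
    exact Finset.sum_congr rfl fun j _ => by
      rw [integral_const_mul, hkey j]
  -- ∫ W^2 = Σᵢ Σⱼ wᵢ wⱼ Tᵢⱼ
  have hWW : ∫ ω, (∑ j, w j * X j ω) ^ 2 ∂μ = ∑ i, ∑ j, w i * w j * T i j := by
    have : ∀ ω, (∑ j, w j * X j ω) ^ 2 = ∑ i, ∑ j, w i * w j * (X i ω * X j ω) := by
      intro ω
      rw [sq, Finset.sum_mul_sum]
      exact Finset.sum_congr rfl fun i _ => Finset.sum_congr rfl fun j _ => by ring
    rw [integral_congr_ae (Filter.Eventually.of_forall this),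
      integral_finset_sum _ (fun i _ => integrable_finset_sum _
        (fun j _ => (hIXX i j).const_mul (w i * w j)))]
    exact Finset.sum_congr rfl fun i _ => by
      rw [integral_finset_sum _ (fun j _ => (hIXX i j).const_mul (w i * w j))]
      exact Finset.sum_congr rfl fun j _ => integral_const_mul _ _
  -- ∫ (Xᵢ - Xⱼ)^2 = Sᵢ - 2 Tᵢⱼ + Sⱼ
  have hXiXj : ∀ i j, ∫ ω, (X i ω - X j ω) ^ 2 ∂μ = S i - 2 * T i j + S j := by
    intro i j
    have : ∀ ω, (X i ω - X j ω) ^ 2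
        = X i ω ^ 2 - 2 * (X i ω * X j ω) + X j ω ^ 2 := fun ω => by ring
    have hsub : Integrable (fun ω => X i ω ^ 2 - 2 * (X i ω * X j ω)) μ :=
      (hX i).integrable_sq.sub ((hIXX i j).const_mul 2)
    rw [integral_congr_ae (Filter.Eventually.of_forall this),
      integral_add hsub (hX j).integrable_sq,
      integral_sub (hX i).integrable_sq ((hIXX i j).const_mul 2), integral_const_mul]
  -- ∫ (Y - W)^2 = A - 2 Σ wⱼ Sⱼ + ∫ W^2
  have hLHS : ∫ ω, (Y ω - ∑ j, w j * X j ω) ^ 2 ∂μ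
      = A - 2 * (∑ j, w j * S j) + ∑ i, ∑ j, w i * w j * T i j := by
    have : ∀ ω, (Y ω - ∑ j, w j * X j ω) ^ 2
        = Y ω ^ 2 - 2 * (Y ω * ∑ j, w j * X j ω) + (∑ j, w j * X j ω) ^ 2 :=
      fun ω => by ring
    have hsub : Integrable (fun ω => Y ω ^ 2 - 2 * (Y ω * ∑ j, w j * X j ω)) μ :=
      hIYY.sub (hIYW.const_mul 2)
    rw [integral_congr_ae (Filter.Eventually.of_forall this),
      integral_add hsub hIWW,
      integral_sub hIYY (hIYW.const_mul 2), integral_const_mul, hYW, hWW]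
  -- final algebra
  rw [hLHS, hWW]
  have hsum : ∑ i, ∑ j, w i * w j * ∫ ω, (X i ω - X j ω) ^ 2 ∂μ
      = 2 * (∑ j, w j * S j) - 2 * (∑ i, ∑ j, w i * w j * T i j) := by
    have h1 : ∀ i, ∑ j, w i * w j * (S i - 2 * T i j + S j)
        = w i * S i + w i * (∑ j, w j * S j) - 2 * ∑ j, w i * w j * T i j := by
      intro i
      have e : ∀ j, w i * w j * (S i - 2 * T i j + S j)
          = w j * (w i * S i) + w i * (w j * S j) - 2 * (w i * w j * T i j) :=
        fun j => by ring
      rw [Finset.sum_congr rfl fun j _ => e j, Finset.sum_sub_distrib,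
        Finset.sum_add_distrib, ← Finset.sum_mul, hw1, one_mul, ← Finset.mul_sum,
        ← Finset.mul_sum]
    calc ∑ i, ∑ j, w i * w j * ∫ ω, (X i ω - X j ω) ^ 2 ∂μ
        = ∑ i, (w i * S i + w i * (∑ j, w j * S j) - 2 * ∑ j, w i * w j * T i j) := by
          refine Finset.sum_congr rfl fun i _ => ?_
          rw [← h1 i]
          exact Finset.sum_congr rfl fun j _ => by rw [hXiXj i j]
      _ = 2 * (∑ j, w j * S j) - 2 * (∑ i, ∑ j, w i * w j * T i j) := by
          rw [Finset.sum_sub_distrib, Finset.sum_add_distrib, ← Finset.sum_mul,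
            hw1, one_mul, ← Finset.mul_sum]
          ring
  rw [hsum]; ring
end

section
/- Let X_w be a non-trivial weighted arithmetic mean of calibrated predictions and X_w'' := E[Y | X_w] its calibrated version. Then E[X_w] = E[X_w''] and Var(X_w) < Var(X_w''), i.e., X_w is strictly under-confident relative to its calibrated version. -/
open MeasureTheory ProbabilityTheory

section Aux

variable {Ω : Type*} [m0 : MeasurableSpace Ω] {μ : Measure Ω}

private lemma aux_int_mul {f g : Ω → ℝ} (hf : MemLp f 2 μ) (hg : MemLp g 2 μ) :
    Integrable (fun ω => f ω * g ω) μ := by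
  have h : MemLp (f • g) 1 μ :=
    hg.smul hf (hpqr := ⟨by simp [ENNReal.inv_two_add_inv_two]⟩)
  exact memLp_one_iff_integrable.mp h

private lemma aux_integral_mul_condexp {m : MeasurableSpace Ω} (hm : m ≤ m0)
    [SigmaFinite (μ.trim hm)] {f g : Ω → ℝ} (hg : StronglyMeasurable[m] g)
    (hgf : Integrable (fun ω => g ω * f ω) μ) (hf : Integrable f μ) :
    ∫ ω, g ω * f ω ∂μ = ∫ ω, g ω * (μ[f|m]) ω ∂μ := by
  have h := condExp_mul_of_stronglyMeasurable_left hg hgf hf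
  calc ∫ ω, g ω * f ω ∂μ = ∫ ω, (g * f) ω ∂μ := rfl
    _ = ∫ ω, (μ[g * f|m]) ω ∂μ := (integral_condExp hm).symm
    _ = ∫ ω, (g * (μ[f|m])) ω ∂μ := integral_congr_ae h
    _ = ∫ ω, g ω * (μ[f|m]) ω ∂μ := rfl

private lemma aux_memℒp_condexp {m : MeasurableSpace Ω} (hm : m ≤ m0) [IsFiniteMeasure μ]
    {f : Ω → ℝ} (hf : MemLp f 2 μ) : MemLp (μ[f|m]) 2 μ := by
  have hG : ((condExpL2 ℝ ℝ hm (hf.toLp f) : Lp ℝ 2 μ) : Ω → ℝ) =ᵐ[μ] μ[f|m] := by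
    refine ae_eq_condExp_of_forall_setIntegral_eq hm (hf.integrable one_le_two)
      (fun s hs hμs => integrableOn_condExpL2_of_measure_ne_top hm hμs.ne _)
      (fun s hs hμs => ?_) (aestronglyMeasurable_condExpL2 hm _)
    rw [integral_condExpL2_eq hm (hf.toLp f) hs hμs.ne]
    exact integral_congr_ae (ae_restrict_of_ae (MemLp.coeFn_toLp hf))
  exact (Lp.memLp _).ae_eq hG

private lemma aux_key_id {N : ℕ} (w x : Fin N → ℝ) (hw1 : ∑ j, w j = 1) :
    ∑ i, ∑ j, w i * w j * (x i - x j) ^ 2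
      = 2 * ((∑ j, w j * x j ^ 2) - (∑ j, w j * x j) ^ 2) := by
  have h1 : ∀ i : Fin N, ∑ j, w i * w j * (x i - x j) ^ 2
      = w i * x i ^ 2 - 2 * (w i * x i) * (∑ j, w j * x j) + w i * (∑ j, w j * x j ^ 2) := by
    intro i
    have h : ∀ j : Fin N, w i * w j * (x i - x j) ^ 2
        = (w i * x i ^ 2) * w j - 2 * (w i * x i) * (w j * x j) + w i * (w j * x j ^ 2) :=
      fun j => by ring
    rw [Finset.sum_congr rfl fun j _ => h j, Finset.sum_add_distrib, Finset.sum_sub_distrib,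
      ← Finset.mul_sum, ← Finset.mul_sum, ← Finset.mul_sum, hw1]
    ring
  rw [Finset.sum_congr rfl fun i _ => h1 i, Finset.sum_add_distrib, Finset.sum_sub_distrib,
    ← Finset.sum_mul, ← Finset.sum_mul, hw1,
    show (∑ i, 2 * (w i * x i)) = 2 * ∑ i, w i * x i from by rw [Finset.mul_sum]]
  ring

end Aux

/-- A non-trivial weighted arithmetic mean `X_w` of calibrated predictions is strictly
under-confident relative to its calibrated version `X_w'' = E[Y | X_w]`:
`E[X_w] = E[X_w'']` and `Var(X_w) < Var(X_w'')`. -/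
theorem weighted_mean_underconfident
    {Ω : Type*} [m : MeasurableSpace Ω] (μ : Measure Ω) [IsProbabilityMeasure μ]
    {N : ℕ} (Y : Ω → ℝ) (X : Fin N → Ω → ℝ) (w : Fin N → ℝ)
    (hY : MemLp Y 2 μ) (hX : ∀ j, MemLp (X j) 2 μ)
    (hw : ∀ j, 0 ≤ w j) (hw1 : ∑ j, w j = 1)
    (hle : ∀ j, MeasurableSpace.comap (X j) Real.measurableSpace ≤ m)
    (hcal : ∀ j, X j =ᵐ[μ] μ[Y | MeasurableSpace.comap (X j) Real.measurableSpace])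
    (hnontriv : ∃ i j : Fin N, i ≠ j ∧ 0 < w i ∧ 0 < w j ∧
      0 < μ {ω | X i ω ≠ X j ω})
    (Xw : Ω → ℝ) (hXw : Xw = fun ω => ∑ j, w j * X j ω)
    (Xw'' : Ω → ℝ) (hXw'' : Xw'' = μ[Y | MeasurableSpace.comap Xw Real.measurableSpace]) :
    ∫ ω, Xw ω ∂μ = ∫ ω, Xw'' ω ∂μ ∧ variance Xw μ < variance Xw'' μ := by
  obtain ⟨i0, j0, hij, hwi0, hwj0, hpos⟩ := hnontriv
  have hXm : ∀ j, Measurable (X j) := fun j => measurable_iff_comap_le.mpr (hle j)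
  have hXwm : Measurable Xw := by
    rw [hXw]; exact Finset.measurable_sum _ fun j _ => measurable_const.mul (hXm j)
  have hmw : MeasurableSpace.comap Xw Real.measurableSpace ≤ m := hXwm.comap_le
  have hYi : Integrable Y μ := hY.integrable one_le_two
  have hXwmem : MemLp Xw 2 μ := by
    rw [hXw]; exact memLp_finsetSum _ fun j _ => (hX j).const_mul (w j)
  have hXw''mem : MemLp Xw'' 2 μ := by rw [hXw'']; exact aux_memℒp_condexp hmw hY
  -- means
  have hintXj : ∀ j, ∫ ω, X j ω ∂μ = ∫ ω, Y ω ∂μ := by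
    intro j
    rw [integral_congr_ae (hcal j), integral_condExp (hle j)]
  have hmean : ∫ ω, Xw ω ∂μ = ∫ ω, Y ω ∂μ := by
    rw [hXw, integral_finset_sum _ fun j _ => ((hX j).integrable one_le_two).const_mul (w j)]
    simp_rw [integral_const_mul, hintXj]
    rw [← Finset.sum_mul, hw1, one_mul]
  have hmean'' : ∫ ω, Xw'' ω ∂μ = ∫ ω, Y ω ∂μ := by rw [hXw'', integral_condExp hmw]
  have hM : ∫ ω, Xw ω ∂μ = ∫ ω, Xw'' ω ∂μ := hmean.trans hmean''.symm
  -- ∫ X_j Y = ∫ X_j ^ 2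
  have hXjY : ∀ j, ∫ ω, X j ω * Y ω ∂μ = ∫ ω, X j ω ^ 2 ∂μ := by
    intro j
    have hgm : StronglyMeasurable[MeasurableSpace.comap (X j) Real.measurableSpace] (X j) :=
      (Measurable.of_comap_le le_rfl).stronglyMeasurable
    have h' : (fun ω => X j ω * (μ[Y|MeasurableSpace.comap (X j) Real.measurableSpace]) ω)
        =ᵐ[μ] fun ω => X j ω ^ 2 :=
      (hcal j).mono fun ω hω => by dsimp only; rw [← hω, pow_two]
    rw [aux_integral_mul_condexp (hle j) hgm (aux_int_mul (hX j) hY) hYi,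
      integral_congr_ae h']
  have hB : ∫ ω, Xw ω * Y ω ∂μ = ∑ j, w j * ∫ ω, X j ω ^ 2 ∂μ := by
    have hpt : (fun ω => Xw ω * Y ω) = fun ω => ∑ j, w j * (X j ω * Y ω) := by
      funext ω; rw [hXw]; rw [Finset.sum_mul]; exact Finset.sum_congr rfl fun j _ => by ring
    rw [hpt, integral_finset_sum _ fun j _ => (aux_int_mul (hX j) hY).const_mul (w j)]
    simp_rw [integral_const_mul]
    exact Finset.sum_congr rfl fun j _ => by rw [hXjY j]
  -- strict convexity: ∫ Xw^2 < ∑ w_j ∫ X_j^2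
  have hsq : ∀ i j : Fin N, Integrable (fun ω => (X i ω - X j ω) ^ 2) μ :=
    fun i j => ((hX i).sub (hX j)).integrable_sq
  have hsqc : ∀ i j : Fin N, Integrable (fun ω => w i * w j * (X i ω - X j ω) ^ 2) μ :=
    fun i j => (hsq i j).const_mul _
  have hrow : ∀ i : Fin N, Integrable (fun ω => ∑ j, w i * w j * (X i ω - X j ω) ^ 2) μ :=
    fun i => integrable_finset_sum _ fun j _ => hsqc i j
  have hq : ∀ i j, 0 ≤ ∫ ω, (X i ω - X j ω) ^ 2 ∂μ :=
    fun i j => integral_nonneg fun ω => sq_nonneg _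
  have hq0 : 0 < ∫ ω, (X i0 ω - X j0 ω) ^ 2 ∂μ := by
    rw [integral_pos_iff_support_of_nonneg_ae (Filter.Eventually.of_forall fun ω => sq_nonneg _)
      (hsq i0 j0)]
    have hset : (Function.support fun ω => (X i0 ω - X j0 ω) ^ 2) = {ω | X i0 ω ≠ X j0 ω} := by
      ext ω; simp [Function.mem_support, sub_eq_zero, pow_eq_zero_iff]
    rw [hset]; exact hpos
  have hpos2 : 0 < ∑ i, ∑ j, w i * w j * ∫ ω, (X i ω - X j ω) ^ 2 ∂μ := by
    refine Finset.sum_pos'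
      (fun i _ => Finset.sum_nonneg fun j _ => mul_nonneg (mul_nonneg (hw i) (hw j)) (hq i j))
      ⟨i0, Finset.mem_univ i0, Finset.sum_pos'
        (fun j _ => mul_nonneg (mul_nonneg (hw i0) (hw j)) (hq i0 j))
        ⟨j0, Finset.mem_univ j0, mul_pos (mul_pos hwi0 hwj0) hq0⟩⟩
  have hint1 : Integrable (fun ω => ∑ j, w j * X j ω ^ 2) μ :=
    integrable_finset_sum _ fun j _ => ((hX j).integrable_sq).const_mul (w j)
  have hint2 : Integrable (fun ω => Xw ω ^ 2) μ := hXwmem.integrable_sq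
  have hid : ∑ i, ∑ j, w i * w j * ∫ ω, (X i ω - X j ω) ^ 2 ∂μ
      = 2 * ((∑ j, w j * ∫ ω, X j ω ^ 2 ∂μ) - ∫ ω, Xw ω ^ 2 ∂μ) := by
    have key : ∀ ω, ∑ i, ∑ j, w i * w j * (X i ω - X j ω) ^ 2
        = 2 * ((∑ j, w j * X j ω ^ 2) - Xw ω ^ 2) := by
      intro ω; rw [hXw]; exact aux_key_id w (fun j => X j ω) hw1
    have swap : ∫ ω, ∑ i, ∑ j, w i * w j * (X i ω - X j ω) ^ 2 ∂μ
        = ∑ i, ∑ j, w i * w j * ∫ ω, (X i ω - X j ω) ^ 2 ∂μ := by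
      rw [integral_finset_sum _ fun i _ => hrow i]
      refine Finset.sum_congr rfl fun i _ => ?_
      rw [integral_finset_sum _ fun j _ => hsqc i j]
      exact Finset.sum_congr rfl fun j _ => integral_const_mul _ _
    rw [← swap]
    simp only [key]
    rw [integral_const_mul, integral_sub hint1 hint2,
      integral_finset_sum _ fun j _ => ((hX j).integrable_sq).const_mul (w j)]
    simp_rw [integral_const_mul]
  have hAS : ∫ ω, Xw ω ^ 2 ∂μ < ∑ j, w j * ∫ ω, X j ω ^ 2 ∂μ := by linarith
  -- ∫ Xw·Y = ∫ Xw·Xw''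
  have hD : ∫ ω, Xw ω * Y ω ∂μ = ∫ ω, Xw ω * Xw'' ω ∂μ := by
    have hgm : StronglyMeasurable[MeasurableSpace.comap Xw Real.measurableSpace] Xw :=
      (Measurable.of_comap_le le_rfl).stronglyMeasurable
    rw [aux_integral_mul_condexp hmw hgm (aux_int_mul hXwmem hY) hYi, hXw'']
  -- ∫ Xw''² ≥ 2 ∫ Xw Xw'' − ∫ Xw²
  have hCD : 0 ≤ ∫ ω, Xw'' ω ^ 2 ∂μ - 2 * ∫ ω, Xw ω * Xw'' ω ∂μ + ∫ ω, Xw ω ^ 2 ∂μ := by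
    have h0 : 0 ≤ ∫ ω, (Xw'' ω - Xw ω) ^ 2 ∂μ := integral_nonneg fun ω => sq_nonneg _
    have hi1 : Integrable (fun ω => Xw'' ω ^ 2) μ := hXw''mem.integrable_sq
    have hi2 : Integrable (fun ω => 2 * (Xw ω * Xw'' ω)) μ :=
      (aux_int_mul hXwmem hXw''mem).const_mul 2
    have hi3 : Integrable (fun ω => Xw'' ω ^ 2 - 2 * (Xw ω * Xw'' ω)) μ := hi1.sub hi2
    have hptt : ∀ ω, (Xw'' ω - Xw ω) ^ 2
        = Xw'' ω ^ 2 - 2 * (Xw ω * Xw'' ω) + Xw ω ^ 2 := fun ω => by ring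
    have hexp : ∫ ω, (Xw'' ω - Xw ω) ^ 2 ∂μ
        = ∫ ω, Xw'' ω ^ 2 ∂μ - 2 * ∫ ω, Xw ω * Xw'' ω ∂μ + ∫ ω, Xw ω ^ 2 ∂μ := by
      simp only [hptt]
      rw [integral_add hi3 hint2, integral_sub hi1 hi2, integral_const_mul]
    linarith
  have hAC : ∫ ω, Xw ω ^ 2 ∂μ < ∫ ω, Xw'' ω ^ 2 ∂μ := by linarith
  refine ⟨hM, ?_⟩
  rw [variance_eq_sub hXwmem, variance_eq_sub hXw''mem]
  simp only [Pi.pow_apply]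
  rw [hM]
  linarith
end

section
/- In the two-expert linear model with independent components: if X₁ = X_(1) + X_(1,2) and X₂ = X_(2) + X_(1,2) where X_(1), X_(2), X_(1,2) are independent, mean-zero, with Var(X_(1)), Var(X_(2)) > 0 and Var(X_(1,2)) ≥ 0, and δⱼ = Var(Xⱼ), ρ = Cov(X₁,X₂) = Var(X_(1,2)), then the least-squares coefficients βⱼ = (δ₁δ₂ − ρδ_i)/(δ₁δ₂ − ρ²) (i ≠ j) satisfy β₁ > 0, β₂ > 0, and β₁ + β₂ > 1. -/
open MeasureTheory ProbabilityTheory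

/-- The covariance of two real random variables. -/
noncomputable def cov {Ω : Type*} {mΩ : MeasurableSpace Ω} (X Y : Ω → ℝ) (μ : Measure Ω) : ℝ :=
  ∫ ω, (X ω - ∫ x, X x ∂μ) * (Y ω - ∫ x, Y x ∂μ) ∂μ

/-- Two-expert linear model with independent components: if `X₁ = X_(1) + X_(1,2)` and
`X₂ = X_(2) + X_(1,2)` with `X_(1), X_(2), X_(1,2)` independent, mean zero,
`Var(X_(1)), Var(X_(2)) > 0`, then `ρ = Cov(X₁, X₂) = Var(X_(1,2))` and the
least-squares coefficients `βⱼ = (δ₁δ₂ − ρδᵢ)/(δ₁δ₂ − ρ²)` satisfy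
`β₁ > 0`, `β₂ > 0`, and `β₁ + β₂ > 1`. -/
theorem two_expert_coefficients
    {Ω : Type*} [m : MeasurableSpace Ω] (μ : Measure Ω) [IsProbabilityMeasure μ]
    (Z : Fin 3 → Ω → ℝ)  -- Z 0 = X_(1), Z 1 = X_(2), Z 2 = X_(1,2)
    (hmeas : ∀ i, Measurable (Z i))
    (hZ : ∀ i, MemLp (Z i) 2 μ)
    (hindep : iIndepFun Z μ)
    (hmean : ∀ i, ∫ ω, Z i ω ∂μ = 0)
    (hvar0 : 0 < variance (Z 0) μ) (hvar1 : 0 < variance (Z 1) μ)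
    (X₁ X₂ : Ω → ℝ)
    (hX₁ : X₁ = fun ω => Z 0 ω + Z 2 ω) (hX₂ : X₂ = fun ω => Z 1 ω + Z 2 ω)
    (δ₁ δ₂ ρ β₁ β₂ : ℝ)
    (hδ₁ : δ₁ = variance X₁ μ) (hδ₂ : δ₂ = variance X₂ μ)
    (hρ : ρ = cov X₁ X₂ μ)
    (hβ₁ : β₁ = (δ₁ * δ₂ - ρ * δ₂) / (δ₁ * δ₂ - ρ ^ 2))
    (hβ₂ : β₂ = (δ₁ * δ₂ - ρ * δ₁) / (δ₁ * δ₂ - ρ ^ 2)) :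
    ρ = variance (Z 2) μ ∧ 0 < β₁ ∧ 0 < β₂ ∧ 1 < β₁ + β₂ := by
  set v0 := variance (Z 0) μ
  set v1 := variance (Z 1) μ
  set v2 := variance (Z 2) μ
  have hv2 : 0 ≤ v2 := variance_nonneg _ _
  -- pairwise independence
  have hi01 : IndepFun (Z 0) (Z 1) μ := hindep.indepFun (by decide)
  have hi02 : IndepFun (Z 0) (Z 2) μ := hindep.indepFun (by decide)
  have hi12 : IndepFun (Z 1) (Z 2) μ := hindep.indepFun (by decide)
  have hint : ∀ i, Integrable (Z i) μ := fun i => (hZ i).integrable one_le_two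
  -- means of X₁, X₂
  have hm1 : ∫ ω, X₁ ω ∂μ = 0 := by
    rw [hX₁, integral_add (hint 0) (hint 2), hmean 0, hmean 2]; ring
  have hm2 : ∫ ω, X₂ ω ∂μ = 0 := by
    rw [hX₂, integral_add (hint 1) (hint 2), hmean 1, hmean 2]; ring
  -- product integrals
  have hz01 : ∫ ω, Z 0 ω * Z 1 ω ∂μ = 0 := by
    have h : ∫ ω, Z 0 ω * Z 1 ω ∂μ = (∫ ω, Z 0 ω ∂μ) * ∫ ω, Z 1 ω ∂μ :=
      hi01.integral_fun_mul_eq_mul_integral (hint 0).1 (hint 1).1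
    rw [h, hmean 0]; ring
  have hz02 : ∫ ω, Z 0 ω * Z 2 ω ∂μ = 0 := by
    have h : ∫ ω, Z 0 ω * Z 2 ω ∂μ = (∫ ω, Z 0 ω ∂μ) * ∫ ω, Z 2 ω ∂μ :=
      hi02.integral_fun_mul_eq_mul_integral (hint 0).1 (hint 2).1
    rw [h, hmean 0]; ring
  have hz12 : ∫ ω, Z 1 ω * Z 2 ω ∂μ = 0 := by
    have h : ∫ ω, Z 1 ω * Z 2 ω ∂μ = (∫ ω, Z 1 ω ∂μ) * ∫ ω, Z 2 ω ∂μ :=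
      hi12.integral_fun_mul_eq_mul_integral (hint 1).1 (hint 2).1
    rw [h, hmean 1]; ring
  have hz22 : ∫ ω, Z 2 ω * Z 2 ω ∂μ = v2 := by
    have := variance_eq_sub (hZ 2)
    rw [hmean 2] at this
    simp only [Pi.pow_apply, sq] at this
    linarith [this]
  -- integrability of products
  have hI01 : Integrable (fun ω => Z 0 ω * Z 1 ω) μ := hi01.integrable_mul (hint 0) (hint 1)
  have hI02 : Integrable (fun ω => Z 0 ω * Z 2 ω) μ := hi02.integrable_mul (hint 0) (hint 2)
  have hI12 : Integrable (fun ω => Z 1 ω * Z 2 ω) μ := hi12.integrable_mul (hint 1) (hint 2)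
  have hI22 : Integrable (fun ω => Z 2 ω * Z 2 ω) μ := by
    have := (hZ 2).integrable_sq
    simpa [sq] using this
  -- ρ = v2
  have hρv : ρ = v2 := by
    rw [hρ, cov, hm1, hm2]
    simp only [sub_zero, hX₁, hX₂]
    have : ∀ ω, (Z 0 ω + Z 2 ω) * (Z 1 ω + Z 2 ω)
        = Z 0 ω * Z 1 ω + Z 0 ω * Z 2 ω + Z 1 ω * Z 2 ω + Z 2 ω * Z 2 ω := fun ω => by ring
    simp only [this]
    have hS2 : Integrable (fun ω => Z 0 ω * Z 1 ω + Z 0 ω * Z 2 ω) μ := hI01.add hI02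
    have hS3 : Integrable (fun ω => Z 0 ω * Z 1 ω + Z 0 ω * Z 2 ω + Z 1 ω * Z 2 ω) μ :=
      hS2.add hI12
    rw [integral_add hS3 hI22, integral_add hS2 hI12, integral_add hI01 hI02,
      hz01, hz02, hz12, hz22]
    ring
  -- variances of X₁, X₂
  have hd1 : δ₁ = v0 + v2 := by
    rw [hδ₁, hX₁]
    exact hi02.variance_add (hZ 0) (hZ 2)
  have hd2 : δ₂ = v1 + v2 := by
    rw [hδ₂, hX₂]
    exact hi12.variance_add (hZ 1) (hZ 2)
  -- algebra
  have hden : δ₁ * δ₂ - ρ ^ 2 = v0 * v1 + v0 * v2 + v1 * v2 := by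
    rw [hd1, hd2, hρv]; ring
  have hdenpos : 0 < δ₁ * δ₂ - ρ ^ 2 := by
    rw [hden]; positivity
  have hn1 : δ₁ * δ₂ - ρ * δ₂ = v0 * (v1 + v2) := by rw [hd1, hd2, hρv]; ring
  have hn2 : δ₁ * δ₂ - ρ * δ₁ = v1 * (v0 + v2) := by rw [hd1, hd2, hρv]; ring
  have hb1 : 0 < β₁ := by
    rw [hβ₁]; apply div_pos _ hdenpos; rw [hn1]; positivity
  have hb2 : 0 < β₂ := by
    rw [hβ₂]; apply div_pos _ hdenpos; rw [hn2]; positivity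
  refine ⟨hρv, hb1, hb2, ?_⟩
  rw [hβ₁, hβ₂, ← add_div, lt_div_iff₀ hdenpos, one_mul, hn1, hn2, hden]
  nlinarith [mul_pos hvar0 hvar1]
end
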